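/- If a₁,…,a_q > 0 satisfy ∑ᵢ aᵢ < 2q, then for all u ∈ [0,2], g_{a₁,…,a_q}(u) = 1 + ∑_{m≥1} d_m (u−1)^m, where d_m = (1/(q−1)!)[ (m+q−1)⋯(m+1)·((∑aᵢ−q)/q)^m + ∑_{k+j=m, 1≤j≤q} (k+q−1)⋯(k+1)·((∑aᵢ−q)/q)^k·(σ_j + σ_{j−1}) ], with σ₀=1, σᵢ = ∑_{2≤j₁<⋯<jᵢ≤q} ∏_l (1−a_{j_l}) for 1≤i≤q−1, σᵢ=0 for i≥q. -/

import Mathlib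

noncomputable def g (q : ℕ) (a : ℕ → ℝ) (u : ℝ) : ℝ :=
  (q : ℝ) ^ q * u * (∏ i ∈ Finset.Icc 2 q, (a i + (1 - a i) * u)) /
    ((∑ i ∈ Finset.Icc 1 q, a i) - ((∑ i ∈ Finset.Icc 1 q, a i) - q) * u) ^ q

/-- elementary symmetric functions of the (1-aᵢ), i = 2,…,q -/
noncomputable def tau (q : ℕ) (a : ℕ → ℝ) (i : ℕ) : ℝ :=
  ∑ s ∈ (Finset.Icc 2 q).powersetCard i, ∏ j ∈ s, (1 - a j)

/-- the power series coefficients of g around 1 -/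
noncomputable def d (q : ℕ) (a : ℕ → ℝ) (m : ℕ) : ℝ :=
  (1 / (Nat.factorial (q - 1))) *
    ((∏ l ∈ Finset.range (q - 1), ((m : ℝ) + 1 + l)) *
        (((∑ i ∈ Finset.Icc 1 q, a i) - q) / q) ^ m
      + ∑ j ∈ Finset.Icc 1 (min q m),
          (∏ l ∈ Finset.range (q - 1), ((m - j : ℕ) + 1 + l : ℝ)) *
            (((∑ i ∈ Finset.Icc 1 q, a i) - q) / q) ^ (m - j) *
            (tau q a j + tau q a (j - 1)))

lemma aux_asc (n k : ℕ) : (∏ l ∈ Finset.range n, ((k:ℝ) + 1 + l)) =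
    (n.factorial : ℝ) * ((k + n).choose n) := by
  induction n with
  | zero => simp
  | succ n ih =>
      rw [Finset.prod_range_succ, ih]
      have h := Nat.add_one_mul_choose_eq (k + n) n
      have h' : ((k+n+1 : ℕ):ℝ) * ((k+n).choose n) = ((k+n+1).choose (n+1)) * ((n:ℝ)+1) := by
        exact_mod_cast congrArg (Nat.cast : ℕ → ℝ) h
      rw [Nat.factorial_succ]
      push_cast at h' ⊢
      rw [show k + (n+1) = k + n + 1 from rfl]
      linear_combination (n.factorial : ℝ) * h'

lemma aux_prod_expand (s : Finset ℕ) (b : ℕ → ℝ) (t : ℝ) :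
    ∏ i ∈ s, (1 + b i * t) =
      ∑ j ∈ Finset.range (s.card + 1), (∑ w ∈ s.powersetCard j, ∏ i ∈ w, b i) * t ^ j := by
  have h1 : ∀ i ∈ s, 1 + b i * t = b i * t + 1 := fun _ _ => by ring
  rw [Finset.prod_congr rfl h1, Finset.prod_add, Finset.powerset_card_disjiUnion]
  erw [Finset.sum_disjiUnion]
  refine Finset.sum_congr rfl fun j hj => ?_
  rw [Finset.sum_mul]
  refine Finset.sum_congr rfl fun w hw => ?_
  obtain ⟨hsub, hcard⟩ := Finset.mem_powersetCard.mp hw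
  simp [Finset.prod_mul_distrib, hcard]

lemma main_hasSum (q : ℕ) (hq : 1 ≤ q) (a : ℕ → ℝ)
    (ha : ∀ i ∈ Finset.Icc 1 q, 0 < a i)
    (hsum : ∑ i ∈ Finset.Icc 1 q, a i < 2 * q)
    (u : ℝ) (hu : u ∈ Set.Icc (0 : ℝ) 2) :
    HasSum (fun m : ℕ => d q a m * (u - 1) ^ m) (g q a u) := by
  obtain ⟨hu0, hu2⟩ := hu
  have hq0 : (0:ℝ) < q := by exact_mod_cast Nat.pos_of_ne_zero (by omega)
  set S : ℝ := ∑ i ∈ Finset.Icc 1 q, a i with hSdef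
  have hS0 : 0 < S := Finset.sum_pos ha ⟨1, Finset.mem_Icc.mpr ⟨le_refl 1, hq⟩⟩
  set c : ℝ := (S - q) / q with hcdef
  set x : ℝ := c * (u - 1) with hxdef
  have hcabs : |c| < 1 := by
    rw [hcdef, abs_div, abs_of_pos hq0, div_lt_one hq0, abs_lt]
    constructor <;> linarith
  have htabs : |u - 1| ≤ 1 := abs_le.mpr ⟨by linarith, by linarith⟩
  have hx : |x| < 1 := by
    rw [hxdef, abs_mul]
    exact lt_of_le_of_lt (mul_le_of_le_one_right (abs_nonneg c) htabs) hcabs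
  have hx1 : (1 : ℝ) - x ≠ 0 := sub_ne_zero.mpr (ne_of_gt (abs_lt.mp hx).2)
  have hB : HasSum (fun k : ℕ => (((k + (q-1)).choose (q-1) : ℕ) : ℝ) * x ^ k)
      (1 / (1 - x) ^ q) := by
    have h := hasSum_choose_mul_geometric_of_norm_lt_one (q-1) (r := x)
      (by rwa [Real.norm_eq_abs])
    rwa [Nat.sub_add_cancel hq] at h
  set e : ℕ → ℝ := fun j => if j = 0 then 1 else tau q a j + tau q a (j-1) with hedef
  have hFj : ∀ j : ℕ, HasSum
      (fun m : ℕ => if j ≤ m then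
          e j * (u-1)^j * ((((m-j) + (q-1)).choose (q-1) : ℕ) : ℝ) * x ^ (m-j) else 0)
      (e j * (u-1)^j * (1 / (1-x)^q)) := by
    intro j
    have h1 := hB.mul_left (e j * (u-1)^j)
    have h2 : Function.Injective (fun k : ℕ => k + j) := fun a b h => by
      simpa using h
    refine (h2.hasSum_iff ?_).mp ?_
    · intro m hm
      have : ¬ j ≤ m := by
        intro h
        exact hm ⟨m - j, by simp; omega⟩
      simp [this]
    · have heq : ((fun m : ℕ => if j ≤ m then
          e j * (u-1)^j * ((((m-j) + (q-1)).choose (q-1) : ℕ) : ℝ) * x ^ (m-j) else 0)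
          ∘ (fun k : ℕ => k + j)) =
          fun k : ℕ => e j * (u-1)^j * (((k + (q-1)).choose (q-1) : ℕ) : ℝ) * x ^ k := by
        funext k
        simp [Function.comp, Nat.le_add_left, Nat.add_sub_cancel]
      rw [heq]
      simpa [mul_assoc] using h1
  have hsumall := hasSum_sum (f := fun (j : ℕ) (m : ℕ) => if j ≤ m then
      e j * (u-1)^j * ((((m-j) + (q-1)).choose (q-1) : ℕ) : ℝ) * x ^ (m-j) else 0)
    (s := Finset.range (q+1)) (fun j _ => hFj j)
  -- pointwise identification with d
  have key : ∀ m : ℕ,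
      (∑ j ∈ Finset.range (q+1), if j ≤ m then
          e j * (u-1)^j * ((((m-j) + (q-1)).choose (q-1) : ℕ) : ℝ) * x ^ (m-j) else 0)
        = d q a m * (u-1)^m := by
    intro m
    have hIcc : ∑ j ∈ Finset.Icc 1 (min q m),
        (∏ l ∈ Finset.range (q - 1), ((m - j : ℕ) + 1 + l : ℝ)) * c ^ (m - j) *
          (tau q a j + tau q a (j - 1))
        = ∑ j ∈ Finset.range q, (if j+1 ≤ m then
            (∏ l ∈ Finset.range (q - 1), ((m - (j+1) : ℕ) + 1 + l : ℝ)) * c ^ (m - (j+1)) *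
              (tau q a (j+1) + tau q a ((j+1) - 1)) else 0) := by
      have h1 : Finset.Icc 1 (min q m) = (Finset.Icc 1 q).filter (fun j => j + 0 ≤ m) := by
        ext j
        simp only [Finset.mem_Icc, Finset.mem_filter]
        omega
      rw [h1, Finset.sum_filter, show Finset.Icc 1 q = Finset.Ico 1 (q+1) from
        (Finset.Ico_add_one_right_eq_Icc 1 q), Finset.sum_Ico_eq_sum_range]
      simp only [Nat.add_sub_cancel]
      refine Finset.sum_congr rfl fun j hj => ?_
      rw [show 1 + j = j + 1 from by omega]
      simp
    have he0 : e 0 = 1 := by simp [hedef]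
    have hterm0 : e 0 * (u-1)^0 * (((m + (q-1)).choose (q-1) : ℕ) : ℝ) * x^m =
        ((∏ l ∈ Finset.range (q - 1), ((m : ℝ) + 1 + l)) * c ^ m) *
          ((1 / ((q-1).factorial : ℝ)) * (u-1)^m) := by
      rw [he0, aux_asc (q-1) m, hxdef, mul_pow]
      have : ((q-1).factorial : ℝ) ≠ 0 := Nat.cast_ne_zero.mpr (Nat.factorial_ne_zero _)
      field_simp
    have htermj : ∀ j ∈ Finset.range q,
        (if j+1 ≤ m then
          e (j+1) * (u-1)^(j+1) * ((((m-(j+1)) + (q-1)).choose (q-1) : ℕ) : ℝ) * x ^ (m-(j+1))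
          else 0)
        = (if j+1 ≤ m then
            (∏ l ∈ Finset.range (q - 1), ((m - (j+1) : ℕ) + 1 + l : ℝ)) * c ^ (m - (j+1)) *
              (tau q a (j+1) + tau q a ((j+1) - 1)) else 0) *
          ((1 / ((q-1).factorial : ℝ)) * (u-1)^m) := by
      intro j hj
      by_cases hjm : j + 1 ≤ m
      · have hpow : x ^ (m-(j+1)) * (u-1)^(j+1) = c ^ (m-(j+1)) * (u-1)^m := by
          rw [hxdef, mul_pow, mul_assoc, ← pow_add]
          congr 2
          omega
        have hej : e (j+1) = tau q a (j+1) + tau q a ((j+1)-1) := by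
          simp [hedef]
        have hfac : ((q-1).factorial : ℝ) ≠ 0 := Nat.cast_ne_zero.mpr (Nat.factorial_ne_zero _)
        rw [if_pos hjm, if_pos hjm, aux_asc (q-1) (m-(j+1)), hej,
          show (tau q a (j+1) + tau q a ((j+1)-1)) * (u-1)^(j+1) *
              ((((m-(j+1)) + (q-1)).choose (q-1) : ℕ) : ℝ) * x ^ (m-(j+1))
            = (tau q a (j+1) + tau q a ((j+1)-1)) *
              ((((m-(j+1)) + (q-1)).choose (q-1) : ℕ) : ℝ) *
              (x ^ (m-(j+1)) * (u-1)^(j+1)) from by ring, hpow]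
        field_simp
      · rw [if_neg hjm, if_neg hjm, zero_mul]
    rw [Finset.sum_range_succ']
    simp only [Nat.sub_zero]
    rw [if_pos (Nat.zero_le m), Finset.sum_congr rfl htermj, hterm0, ← Finset.sum_mul]
    simp only [d, hIcc, ← hSdef, ← hcdef]
    ring
  -- identification of the sum value with g
  have hprod : ∏ i ∈ Finset.Icc 2 q, (a i + (1 - a i) * u)
      = ∑ j ∈ Finset.range q, tau q a j * (u-1)^j := by
    have h1 : ∀ i ∈ Finset.Icc 2 q, a i + (1 - a i) * u = 1 + (1 - a i) * (u-1) :=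
      fun i _ => by ring
    rw [Finset.prod_congr rfl h1, aux_prod_expand]
    have hcard : (Finset.Icc 2 q).card = q - 1 := by rw [Nat.card_Icc]; omega
    rw [hcard, Nat.sub_add_cancel hq]
    exact Finset.sum_congr rfl fun j _ => by rw [tau]
  have htauq : tau q a q = 0 := by
    have h1 : (Finset.Icc 2 q).powersetCard q = ∅ :=
      Finset.powersetCard_eq_empty.mpr (by rw [Nat.card_Icc]; omega)
    simp [tau, h1]
  have htau0 : tau q a 0 = 1 := by simp [tau]
  have hQ : u * (∏ i ∈ Finset.Icc 2 q, (a i + (1 - a i) * u))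
      = ∑ j ∈ Finset.range (q+1), e j * (u-1)^j := by
    rw [hprod, Finset.sum_range_succ']
    have he0 : e 0 = 1 := by simp [hedef]
    have hej : ∀ j : ℕ, e (j+1) = tau q a (j+1) + tau q a j := fun j => by simp [hedef]
    have h2 : (∑ j ∈ Finset.range q, tau q a (j+1) * (u-1)^(j+1)) + 1
        = ∑ j ∈ Finset.range q, tau q a j * (u-1)^j := by
      have h3 := Finset.sum_range_succ' (fun j => tau q a j * (u-1)^j) q
      have h4 := Finset.sum_range_succ (fun j => tau q a j * (u-1)^j) q
      rw [h4] at h3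
      simp only [htau0, htauq, zero_mul, add_zero, pow_zero, mul_one] at h3
      linarith
    have hsplit : ∑ j ∈ Finset.range q, e (j+1) * (u-1)^(j+1)
        = (∑ j ∈ Finset.range q, tau q a (j+1) * (u-1)^(j+1))
          + (∑ j ∈ Finset.range q, tau q a j * (u-1)^j) * (u-1) := by
      rw [Finset.sum_mul, ← Finset.sum_add_distrib]
      refine Finset.sum_congr rfl fun j _ => ?_
      rw [hej, pow_succ]
      ring
    rw [hsplit, he0, pow_zero, mul_one]
    linear_combination -h2
  have hden : S - (S - q) * u = q * (1 - x) := by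
    rw [hxdef, hcdef]
    field_simp
    ring
  have hgval : (∑ j ∈ Finset.range (q+1), e j * (u-1)^j * (1 / (1-x)^q)) = g q a u := by
    rw [← Finset.sum_mul, ← hQ]
    simp only [g, ← hSdef, hden]
    rw [mul_pow]
    have hqq : (q:ℝ)^q ≠ 0 := pow_ne_zero _ (ne_of_gt hq0)
    have hxq : (1-x)^q ≠ 0 := pow_ne_zero _ hx1
    field_simp
  have hfinal : (fun m : ℕ => ∑ j ∈ Finset.range (q+1), if j ≤ m then
      e j * (u-1)^j * ((((m-j) + (q-1)).choose (q-1) : ℕ) : ℝ) * x ^ (m-j) else 0)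
      = fun m : ℕ => d q a m * (u-1)^m := funext key
  rw [hfinal, hgval] at hsumall
  exact hsumall

theorem stmt_15 (q : ℕ) (hq : 1 ≤ q) (a : ℕ → ℝ)
    (ha : ∀ i ∈ Finset.Icc 1 q, 0 < a i)
    (hsum : ∑ i ∈ Finset.Icc 1 q, a i < 2 * q)
    (u : ℝ) (hu : u ∈ Set.Icc (0 : ℝ) 2) :
    HasSum (fun m : ℕ => d q a (m + 1) * (u - 1) ^ (m + 1)) (g q a u - 1) := by
  have h0 := main_hasSum q hq a ha hsum u hu
  have hd0 : d q a 0 = 1 := by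
    have h1 : (∏ l ∈ Finset.range (q-1), (1 + (l:ℝ))) = ((q-1).factorial : ℝ) := by
      simpa using aux_asc (q-1) 0
    have hfac : ((q-1).factorial : ℝ) ≠ 0 := Nat.cast_ne_zero.mpr (Nat.factorial_ne_zero _)
    simp [d, h1]
    field_simp
  have h2 := (hasSum_nat_add_iff' (f := fun m : ℕ => d q a m * (u - 1) ^ m) 1).mpr h0
  simpa [hd0] using h2
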